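/- arXiv:1704.01836 — 3 statements merged into one kernel-verified Lean document; each statement's English description precedes it below -/
import Mathlib

section
/- Let X be a pure k-dimensional simplicial complex, ℓ with k ≤ ℓ ≤ α(X), and S an independent set with |S| ≥ ℓ. Define y^S on Ind_{ℓ-1} ∪ Ind_ℓ by y^S_{ℓ-1}(F) = ℓ if F ⊆ S, y^S_{ℓ-1}(H) = 1 if H ⊆ S, and 0 otherwise. Then the linear map τ_{ℓ-1} satisfies τ_{ℓ-1}(y^S_{ℓ-1}) = ((|S| − ℓ + 1)/(ℓ − 1)) · y^S_{ℓ-2}. -/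
open Finset Matrix

/-- The oriented incidence number `[F:K]` induced by the global linear order on
the vertices: it is `(-1)^j` if `K ⊆ F`, `F ∖ K = {x_j}` and `x_j` is the `j`-th
smallest element of `F`, and `0` otherwise. -/
def inc {V : Type} [DecidableEq V] [LinearOrder V] (F K : Finset V) : ℝ :=
  if K ⊆ F ∧ F.card = K.card + 1 then
    ∑ x ∈ F \ K, (-1 : ℝ) ^ (K.filter (fun y => y < x)).card
  else 0

/-- An abstract simplicial complex on a vertex type `V`: a family of finite subsets
of `V` closed under taking subsets. -/
structure SC (V : Type) [DecidableEq V] where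
  faces : Finset (Finset V)
  down_closed : ∀ ⦃F⦄, F ∈ faces → ∀ ⦃K : Finset V⦄, K ⊆ F → K ∈ faces

variable {V : Type} [Fintype V] [DecidableEq V] [LinearOrder V]

/-- The faces of cardinality `m` (i.e. of dimension `m-1`) of a complex. -/
def SC.dfaces (X : SC V) (m : ℕ) : Finset (Finset V) := X.faces.filter fun F => F.card = m

/-- The faces of cardinality `m`, as a type (index set of the space `C^{m-1}` of
`(m-1)`-dimensional cochains). -/
abbrev Face (X : SC V) (m : ℕ) := {F : Finset V // F ∈ X.dfaces m}

/-- The matrix of the coboundary map `δ_{m-1}` from `(m-1)`-dimensional cochains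
(functions on cardinality-`m` faces) to `m`-dimensional cochains, in the bases of
elementary cochains. -/
def deltaMat (X : SC V) (m : ℕ) : Matrix (Face X (m + 1)) (Face X m) ℝ :=
  fun H F => inc H.1 F.1

/-- The up-Laplacian `L↑_{m-1} = ∂_m δ_{m-1}` acting on `(m-1)`-dimensional cochains,
where `∂ = δ*` is the adjoint (transpose) of the coboundary map. -/
def Lup (X : SC V) (m : ℕ) : Matrix (Face X m) (Face X m) ℝ :=
  (deltaMat X m)ᵀ * deltaMat X m

/-- The down-Laplacian `L↓_m = δ_{m-1} ∂_m` acting on `m`-dimensional cochains. -/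
def Ldown (X : SC V) (m : ℕ) : Matrix (Face X (m + 1)) (Face X (m + 1)) ℝ :=
  deltaMat X m * (deltaMat X m)ᵀ

/-- The space of harmonicSp `i`-cochains `H_i = Z_i ∩ Z^i = ker ∂_i ∩ ker δ_i`. -/
def harmonicSp (X : SC V) (i : ℕ) : Submodule ℝ (Face X (i + 1) → ℝ) :=
  LinearMap.ker (Matrix.mulVecLin (deltaMat X i)ᵀ) ⊓
    LinearMap.ker (Matrix.mulVecLin (deltaMat X (i + 1)))

/-- The type of all `k`-element subsets of `V`. -/
abbrev KSet (V : Type) [Fintype V] [DecidableEq V] (k : ℕ) := {F : Finset V // F.card = k}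

/-- `ε_{F,F'} = [F : F ∩ F'] ⬝ [F' : F ∩ F']`. -/
def eps {V : Type} [DecidableEq V] [LinearOrder V] (F F' : Finset V) : ℝ :=
  inc F (F ∩ F') * inc F' (F ∩ F')

/-- The down-Laplacian `L↓_{k-1}` of the complete complex `K_n^k`, as a matrix indexed
by all `k`-subsets of the vertex set: diagonal entries `k`, off-diagonal entries
`ε_{F,F'}` (which vanish unless `|F ∩ F'| = k-1`). -/
def Lc (V : Type) [Fintype V] [DecidableEq V] [LinearOrder V] (k : ℕ) :
    Matrix (KSet V k) (KSet V k) ℝ :=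
  fun F F' => if F = F' then (k : ℝ) else eps F.1 F'.1

/-- `S` is an independent set of the pure `k`-dimensional complex `X`: it contains
no `k`-dimensional face of `X`. -/
def SC.IsIndep (X : SC V) (k : ℕ) (S : Finset V) : Prop :=
  ∀ H ∈ X.dfaces (k + 1), ¬ H ⊆ S

/-- The independence number `α(X)` of a pure `k`-dimensional complex. -/
noncomputable def alphaNum (X : SC V) (k : ℕ) : ℕ :=
  sSup {m | ∃ S : Finset V, X.IsIndep k S ∧ S.card = m}

/-- `X` is a pure `k`-dimensional simplicial complex: all faces have dimension at
most `k` and every face is contained in a face of dimension `k`. -/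
def SC.Pure (X : SC V) (k : ℕ) : Prop :=
  (∀ F ∈ X.faces, F.card ≤ k + 1) ∧ ∀ F ∈ X.faces, ∃ H ∈ X.dfaces (k + 1), F ⊆ H

/-- Feasibility for the primal semidefinite program defining `ϑ_k(X)`. -/
def thetaFeasible (X : SC V) (k : ℕ) (Y : Matrix (KSet V k) (KSet V k) ℝ) : Prop :=
  Y.PosSemidef ∧ Matrix.trace Y = 1 ∧
  (∀ F F' : KSet V k, F.1 ∪ F'.1 ∈ X.dfaces (k + 1) → Y F F' = 0) ∧
  (∀ F F' : KSet V k, k + 2 ≤ (F.1 ∪ F'.1).card → Y F F' = 0) ∧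
  (∀ F F' G G' : KSet V k, F.1 ∪ F'.1 = G.1 ∪ G'.1 →
    eps F.1 F'.1 * Y F F' = eps G.1 G'.1 * Y G G')

/-- The theta number `ϑ_k(X)` of a pure `k`-dimensional simplicial complex: the optimal
value of the semidefinite program maximizing `⟨L↓_{k-1}, Y⟩` over feasible `Y`. -/
noncomputable def theta (X : SC V) (k : ℕ) : ℝ :=
  sSup {t | ∃ Y, thetaFeasible X k Y ∧ Matrix.trace (Lc V k * Y) = t}

/-- The complete `k`-dimensional complex on the vertex type `V`: all subsets of
cardinality at most `k+1` are faces. -/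
def completeComplex (V : Type) [Fintype V] [DecidableEq V] (k : ℕ) : SC V :=
  ⟨univ.filter fun F => F.card ≤ k + 1, by
    intro F hF K hK
    simp only [mem_filter, mem_univ, true_and] at hF ⊢
    exact le_trans (card_le_card hK) hF⟩

/-- The empty complex (no faces at all), conventionally pure of any dimension. -/
def emptyComplex (V : Type) [DecidableEq V] : SC V :=
  ⟨∅, by intro F hF; simp at hF⟩

/-- The largest eigenvalue of a matrix. -/
noncomputable def lambdaMax {ι : Type} [Fintype ι] (M : Matrix ι ι ℝ) : ℝ :=
  sSup {μ : ℝ | Module.End.HasEigenvalue (Matrix.mulVecLin M) μ}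

/-- The smallest eigenvalue of a matrix. -/
noncomputable def lambdaMin {ι : Type} [Fintype ι] (M : Matrix ι ι ℝ) : ℝ :=
  sInf {μ : ℝ | Module.End.HasEigenvalue (Matrix.mulVecLin M) μ}

/-- The degree of a face `F`: the number of faces of one higher dimension containing it. -/
def SC.deg (X : SC V) (F : Finset V) : ℕ :=
  ((X.dfaces (F.card + 1)).filter fun H => F ⊆ H).card

/-- The minimal degree of a `(k-1)`-dimensional face (a face of cardinality `k`). -/
noncomputable def degMin (X : SC V) (k : ℕ) : ℕ :=
  sInf {m | ∃ F ∈ X.dfaces k, m = X.deg F}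

/-- The up-Laplacian `L↑_{k-1}(X)` extended by zeros to a matrix indexed by all
`k`-subsets of the vertex set. -/
def LupE (X : SC V) (k : ℕ) : Matrix (KSet V k) (KSet V k) ℝ :=
  fun F F' => ∑ H ∈ X.dfaces (k + 1), inc H F.1 * inc H F'.1

/-- The down-Laplacian `L↓_{k-1}(X)` extended by zeros to a matrix indexed by all
`k`-subsets of the vertex set. -/
def LdownE (X : SC V) (k : ℕ) : Matrix (KSet V k) (KSet V k) ℝ :=
  fun F F' =>
    if F.1 ∈ X.faces ∧ F'.1 ∈ X.faces then ∑ K ∈ X.dfaces (k - 1), inc F.1 K * inc F'.1 K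
    else 0

/-- The Lovász theta number of a graph given by an adjacency relation `adj` on a finite
vertex type, in its primal formulation. -/
noncomputable def thetaG {W : Type} [Fintype W] (adj : W → W → Prop) : ℝ :=
  sSup {t | ∃ Z : Matrix W W ℝ, Z.PosSemidef ∧ Matrix.trace Z = 1 ∧
    (∀ v w, adj v w → Z v w = 0) ∧ t = ∑ v, ∑ w, Z v w}

/-- The set of independent sets of cardinality `m` (i.e. `(m-1)`-dimensional faces of the
independence complex) of a pure `k`-dimensional complex `X`. -/
noncomputable def indFaces (X : SC V) (k m : ℕ) : Finset (Finset V) := by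
  classical exact univ.filter fun S => S.card = m ∧ X.IsIndep k S

/-- The map `τ_{ℓ-1} : ℝ^{Ind_{ℓ-1} ∪ Ind_ℓ} → ℝ^{Ind_{ℓ-2} ∪ Ind_{ℓ-1}}`, where an
`i`-dimensional independent set has cardinality `i+1`:
`(τ y)(K) = (1/ℓ) Σ_{F ∈ Ind_{ℓ-1}, K ⊂ F} y(F)` for `K ∈ Ind_{ℓ-2}`, and
`(τ y)(F) = (1/(ℓ(ℓ-1))) y(F) + (1/(ℓ-1)) Σ_{H ∈ Ind_ℓ, F ⊂ H} y(H)` for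
`F ∈ Ind_{ℓ-1}`, and `0` elsewhere. -/
noncomputable def tauMap (X : SC V) (k ℓ : ℕ) (y : Finset V → ℝ) : Finset V → ℝ :=
  fun A =>
    if A ∈ indFaces X k (ℓ - 1) then
      (ℓ : ℝ)⁻¹ * ∑ F ∈ (indFaces X k ℓ).filter (fun F => A ⊆ F), y F
    else if A ∈ indFaces X k ℓ then
      ((ℓ : ℝ) * ((ℓ : ℝ) - 1))⁻¹ * y A +
        ((ℓ : ℝ) - 1)⁻¹ * ∑ H ∈ (indFaces X k (ℓ + 1)).filter (fun H => A ⊆ H), y H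
    else 0

/-- The function `y^S_{ℓ-1}` encoding the matrix `Y^S`: it takes the value `ℓ` on the
`ℓ`-element subsets of `S` (the elements of `Ind_{ℓ-1}` inside `S`), the value `1` on the
`(ℓ+1)`-element subsets of `S`, and `0` elsewhere. -/
noncomputable def yS (S : Finset V) (ℓ : ℕ) : Finset V → ℝ := fun A =>
  if A ⊆ S ∧ A.card = ℓ then (ℓ : ℝ) else if A ⊆ S ∧ A.card = ℓ + 1 then 1 else 0

lemma indep_mono {V : Type} [Fintype V] [DecidableEq V] (X : SC V) (k : ℕ) {S A : Finset V}
    (hS : X.IsIndep k S) (h : A ⊆ S) : X.IsIndep k A :=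
  fun H hH hHA => hS H hH (hHA.trans h)

lemma filter_between {V : Type} [Fintype V] [DecidableEq V] [LinearOrder V]
    (X : SC V) (k : ℕ) {S A : Finset V} (hS : X.IsIndep k S) (hA : A ⊆ S) :
    ((indFaces X k (A.card + 1)).filter fun F => A ⊆ F ∧ F ⊆ S) =
      (S \ A).image (fun x => insert x A) := by
  ext F
  simp only [indFaces, mem_filter, mem_univ, true_and, mem_image, mem_sdiff]
  constructor
  · rintro ⟨⟨hcard, _⟩, hAF, hFS⟩
    have h1 : (F \ A).card = 1 := by rw [card_sdiff_of_subset hAF]; omega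
    obtain ⟨x, hx⟩ := card_eq_one.mp h1
    have hxF : x ∈ F \ A := hx ▸ mem_singleton_self x
    refine ⟨x, ⟨hFS (mem_sdiff.mp hxF).1, (mem_sdiff.mp hxF).2⟩, ?_⟩
    have hu := union_sdiff_of_subset hAF
    rw [hx] at hu
    rw [← hu]
    ext y; simp [mem_insert, or_comm]
  · rintro ⟨x, ⟨hxS, hxA⟩, rfl⟩
    exact ⟨⟨card_insert_of_notMem hxA, indep_mono X k hS (insert_subset hxS hA)⟩,
      subset_insert _ _, insert_subset hxS hA⟩

lemma count_between {V : Type} [Fintype V] [DecidableEq V] [LinearOrder V]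
    (X : SC V) (k : ℕ) {S A : Finset V} (hS : X.IsIndep k S) (hA : A ⊆ S) :
    ((indFaces X k (A.card + 1)).filter fun F => A ⊆ F ∧ F ⊆ S).card = S.card - A.card := by
  rw [filter_between X k hS hA, card_image_of_injOn, card_sdiff_of_subset hA]
  intro x hx y _ h
  simp only at h
  have hx' : x ∈ insert y A := by rw [← h]; exact mem_insert_self x A
  rcases mem_insert.mp hx' with h' | h'
  · exact h'
  · exact absurd h' (mem_sdiff.mp hx).2

lemma sum_key {V : Type} [Fintype V] [DecidableEq V] [LinearOrder V]
    (X : SC V) (k : ℕ) {S A : Finset V} (hS : X.IsIndep k S) (hA : A ⊆ S) (c : ℝ)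
    (f : Finset V → ℝ)
    (hf : ∀ F ∈ indFaces X k (A.card + 1), A ⊆ F → f F = if F ⊆ S then c else 0) :
    ∑ F ∈ (indFaces X k (A.card + 1)).filter (fun F => A ⊆ F), f F
      = ((S.card - A.card : ℕ) : ℝ) * c := by
  rw [Finset.sum_congr rfl
    (fun F hF => hf F (mem_filter.mp hF).1 (mem_filter.mp hF).2)]
  rw [← Finset.sum_filter, Finset.filter_filter, Finset.sum_const, nsmul_eq_mul,
    count_between X k hS hA]

/-- For a pure `k`-dimensional complex `X`, `k ≤ ℓ ≤ α(X)`, and an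
independent set `S` with `|S| ≥ ℓ`, the map `τ_{ℓ-1}` sends `y^S_{ℓ-1}` to
`((|S| − ℓ + 1)/(ℓ − 1)) · y^S_{ℓ-2}`. -/
theorem tau_yS
    {V : Type} [Fintype V] [DecidableEq V] [LinearOrder V] (X : SC V) (k ℓ : ℕ)
    (hk : 1 ≤ k) (hpure : X.Pure k) (hkl : k ≤ ℓ) (hl : 2 ≤ ℓ)
    (S : Finset V) (hS : X.IsIndep k S) (hcard : ℓ ≤ S.card) :
    tauMap X k ℓ (yS S ℓ) =
      fun A => (((S.card : ℝ) - (ℓ : ℝ) + 1) / ((ℓ : ℝ) - 1)) * yS S (ℓ - 1) A := by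
  have hℓ0 : (ℓ : ℝ) ≠ 0 := by positivity
  have hℓ1 : (ℓ : ℝ) - 1 ≠ 0 := by
    have : (2 : ℝ) ≤ (ℓ : ℝ) := by exact_mod_cast hl
    linarith
  funext A
  simp only [tauMap]
  by_cases h1 : A ∈ indFaces X k (ℓ - 1)
  · rw [if_pos h1]
    obtain ⟨hAc, hAi⟩ : A.card = ℓ - 1 ∧ X.IsIndep k A := by
      simpa [indFaces] using h1
    by_cases hAS : A ⊆ S
    · have hc1 : A.card + 1 = ℓ := by omega
      have hsum : ∑ F ∈ (indFaces X k ℓ).filter (fun F => A ⊆ F), yS S ℓ F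
          = ((S.card - A.card : ℕ) : ℝ) * (ℓ : ℝ) := by
        have hs := sum_key X k hS hAS (ℓ : ℝ) (yS S ℓ) ?_
        · rw [hc1] at hs; exact hs
        intro F hF _
        obtain ⟨hFc, -⟩ : F.card = A.card + 1 ∧ X.IsIndep k F := by
          simpa [indFaces] using hF
        by_cases hFS : F ⊆ S
        · simp [yS, hFS, hFc, hc1]
        · simp [yS, hFS]
      rw [hsum]
      have hys : yS S (ℓ - 1) A = ((ℓ : ℝ) - 1) := by
        have : ((ℓ - 1 : ℕ) : ℝ) = (ℓ : ℝ) - 1 := by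
          have := hl; push_cast [Nat.cast_sub (by omega : 1 ≤ ℓ)]; ring
        simp [yS, hAS, hAc, this]
      rw [hys]
      have hsub : ((S.card - A.card : ℕ) : ℝ) = (S.card : ℝ) - (ℓ : ℝ) + 1 := by
        rw [Nat.cast_sub (le_trans (by omega) hcard : A.card ≤ S.card), hAc,
          Nat.cast_sub (by omega : 1 ≤ ℓ)]
        push_cast; ring
      rw [hsub]
      field_simp
      try ring
    · have hzero : ∀ F ∈ (indFaces X k ℓ).filter (fun F => A ⊆ F), yS S ℓ F = 0 := by
        intro F hF
        have hAF : A ⊆ F := (mem_filter.mp hF).2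
        have hFS : ¬ F ⊆ S := fun h => hAS (hAF.trans h)
        simp [yS, hFS]
      rw [Finset.sum_congr rfl hzero]
      simp [yS, hAS]
  · rw [if_neg h1]
    by_cases h2 : A ∈ indFaces X k ℓ
    · rw [if_pos h2]
      obtain ⟨hAc, hAi⟩ : A.card = ℓ ∧ X.IsIndep k A := by
        simpa [indFaces] using h2
      by_cases hAS : A ⊆ S
      · have hsum : ∑ H ∈ (indFaces X k (ℓ + 1)).filter (fun H => A ⊆ H), yS S ℓ H
            = ((S.card - A.card : ℕ) : ℝ) * 1 := by
          have hs := sum_key X k hS hAS 1 (yS S ℓ) ?_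
          · rw [show A.card + 1 = ℓ + 1 by omega] at hs; exact hs
          intro H hH _
          obtain ⟨hHc, -⟩ : H.card = A.card + 1 ∧ X.IsIndep k H := by
            simpa [indFaces] using hH
          by_cases hHS : H ⊆ S
          · have : H.card ≠ ℓ := by omega
            simp [yS, hHS, this, show H.card = ℓ + 1 by omega]
          · simp [yS, hHS]
        rw [hsum]
        have hyA : yS S ℓ A = (ℓ : ℝ) := by simp [yS, hAS, hAc]
        have hys : yS S (ℓ - 1) A = 1 := by
          have hne : A.card ≠ ℓ - 1 := by omega
          simp [yS, hAS, hne, show A.card = (ℓ - 1) + 1 by omega]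
        rw [hyA, hys]
        have hsub : ((S.card - A.card : ℕ) : ℝ) = (S.card : ℝ) - (ℓ : ℝ) := by
          rw [Nat.cast_sub (hAc ▸ hcard : A.card ≤ S.card), hAc]
        rw [hsub]
        field_simp
        try ring
      · have hzero : ∀ H ∈ (indFaces X k (ℓ + 1)).filter (fun H => A ⊆ H), yS S ℓ H = 0 := by
          intro H hH
          have hAH : A ⊆ H := (mem_filter.mp hH).2
          have hHS : ¬ H ⊆ S := fun h => hAS (hAH.trans h)
          simp [yS, hHS]
        rw [Finset.sum_congr rfl hzero]
        simp [yS, hAS]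
    · rw [if_neg h2]
      have hys : yS S (ℓ - 1) A = 0 := by
        by_cases hAS : A ⊆ S
        · have hne1 : A.card ≠ ℓ - 1 := fun h => h1 (by
            simp only [indFaces, mem_filter, mem_univ, true_and]
            exact ⟨h, indep_mono X k hS hAS⟩)
          have hne2 : A.card ≠ (ℓ - 1) + 1 := fun h => h2 (by
            simp only [indFaces, mem_filter, mem_univ, true_and]
            exact ⟨by omega, indep_mono X k hS hAS⟩)
          simp [yS, hne1, hne2]
        · simp [yS, hAS]
      rw [hys, mul_zero]
end

section
/- Let X be a k-dimensional simplicial complex with complete (k-1)-skeleton. Then ϑ_k(X) ≤ k · max over (k-2)-faces K of X of ϑ(lk_X(K)), where ϑ denotes the Lovász theta number of a graph and lk_X(K) is the link graph of K. -/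
open Finset Matrix

variable {V : Type} [Fintype V] [DecidableEq V] [LinearOrder V]

section AuxLemmas

set_option linter.unusedSectionVars false

variable {V : Type} [Fintype V] [DecidableEq V] [LinearOrder V]

lemma inc_of_not_subset {F K : Finset V} (h : ¬ K ⊆ F) : inc F K = 0 := by
  rw [inc, if_neg]; tauto

lemma inc_of_card_ne {F K : Finset V} (h : F.card ≠ K.card + 1) : inc F K = 0 := by
  rw [inc, if_neg]; tauto

lemma exists_insert_of_card_succ {K F : Finset V} (hsub : K ⊆ F) (hc : F.card = K.card + 1) :
    ∃ v, v ∉ K ∧ F = insert v K := by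
  obtain ⟨v, hv⟩ : ∃ v, F \ K = {v} := by
    rw [← Finset.card_eq_one, Finset.card_sdiff_of_subset hsub, hc]; omega
  have hvF : v ∈ F \ K := hv ▸ Finset.mem_singleton_self v
  rw [Finset.mem_sdiff] at hvF
  refine ⟨v, hvF.2, ?_⟩
  have hsub2 : insert v K ⊆ F := Finset.insert_subset hvF.1 hsub
  have hcard : F.card ≤ (insert v K).card := by
    rw [Finset.card_insert_of_notMem hvF.2, hc]
  exact (Finset.eq_of_subset_of_card_le hsub2 hcard).symm

lemma inc_mul_self {F K : Finset V} (hsub : K ⊆ F) (hc : F.card = K.card + 1) :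
    inc F K * inc F K = 1 := by
  obtain ⟨v, hv⟩ : ∃ v, F \ K = {v} := by
    rw [← Finset.card_eq_one, Finset.card_sdiff_of_subset hsub, hc]; omega
  rw [inc, if_pos ⟨hsub, hc⟩, hv, Finset.sum_singleton, ← pow_add]
  exact Even.neg_one_pow ⟨_, rfl⟩

lemma key_sum {k : ℕ} (hk1 : 1 ≤ k) {F F' : Finset V} (hF : F.card = k) (hF' : F'.card = k) :
    ∑ K ∈ Finset.powersetCard (k - 1) Finset.univ, inc F K * inc F' K
      = if F = F' then (k : ℝ) else eps F F' := by
  split_ifs with h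
  · subst h
    have hz : ∀ K ∈ Finset.powersetCard (k - 1) Finset.univ,
        K ∉ Finset.powersetCard (k - 1) F → inc F K * inc F K = 0 := by
      intro K hK1 hK2
      rw [Finset.mem_powersetCard_univ] at hK1
      have : ¬ K ⊆ F := fun hs => hK2 (Finset.mem_powersetCard.mpr ⟨hs, hK1⟩)
      rw [inc_of_not_subset this, zero_mul]
    rw [← Finset.sum_subset (Finset.powersetCard_mono (Finset.subset_univ F)) hz]
    have hone : ∀ K ∈ Finset.powersetCard (k - 1) F, inc F K * inc F K = 1 := by
      intro K hK
      obtain ⟨hKF, hKc⟩ := Finset.mem_powersetCard.mp hK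
      exact inc_mul_self hKF (by omega)
    rw [Finset.sum_congr rfl hone, Finset.sum_const, Finset.card_powersetCard, hF]
    have hch : k.choose (k - 1) = k := by
      have h1 : k - (k - 1) = 1 := by omega
      rw [← Nat.choose_symm (Nat.sub_le k 1), h1, Nat.choose_one_right]
    rw [hch]; simp
  · -- F ≠ F'
    have hinter : (F ∩ F').card ≤ k - 1 := by
      by_contra hlt
      have h1 : (F ∩ F').card ≤ k := hF ▸ Finset.card_le_card Finset.inter_subset_left
      have h2 : (F ∩ F').card = k := by omega
      have : F ∩ F' = F := Finset.eq_of_subset_of_card_le Finset.inter_subset_left (by omega)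
      have hFF' : F ⊆ F' := by rw [← this]; exact Finset.inter_subset_right
      exact h (Finset.eq_of_subset_of_card_le hFF' (by omega))
    by_cases hc : (F ∩ F').card = k - 1
    · rw [Finset.sum_eq_single (F ∩ F')]
      · rfl
      · intro K hK hne
        rw [Finset.mem_powersetCard_univ] at hK
        by_cases hsF : K ⊆ F
        · by_cases hsF' : K ⊆ F'
          · exact absurd (Finset.eq_of_subset_of_card_le (Finset.subset_inter hsF hsF')
              (by omega)) hne
          · rw [inc_of_not_subset hsF', mul_zero]
        · rw [inc_of_not_subset hsF, zero_mul]
      · intro hmem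
        exact absurd (Finset.mem_powersetCard_univ.mpr hc) hmem
    · have h1 : (F ∩ F').card + 1 < k + 1 := by omega
      rw [Finset.sum_eq_zero, eq_comm]
      · rw [eps, inc_of_card_ne (by omega), zero_mul]
      · intro K hK
        rw [Finset.mem_powersetCard_univ] at hK
        by_cases hsF : K ⊆ F
        · by_cases hsF' : K ⊆ F'
          · have : K ⊆ F ∩ F' := Finset.subset_inter hsF hsF'
            have := Finset.card_le_card this
            omega
          · rw [inc_of_not_subset hsF', mul_zero]
        · rw [inc_of_not_subset hsF, zero_mul]

lemma sum_insert_compl {k : ℕ} (hk1 : 1 ≤ k) {K : Finset V} (hK : K.card = k - 1)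
    (h : Finset V → ℝ)
    (hz : ∀ F ∈ Finset.powersetCard k Finset.univ, ¬ K ⊆ F → h F = 0) :
    ∑ v ∈ Kᶜ, h (insert v K) = ∑ F ∈ Finset.powersetCard k Finset.univ, h F := by
  have hinj : ∀ x ∈ Kᶜ, ∀ y ∈ Kᶜ, insert x K = insert y K → x = y := by
    intro x hx y hy hxy
    have hxm : x ∈ insert y K := hxy ▸ Finset.mem_insert_self x K
    rcases Finset.mem_insert.mp hxm with h1 | h1
    · exact h1
    · exact absurd h1 (Finset.mem_compl.mp hx)
  have himg : (Kᶜ).image (fun v => insert v K)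
      = (Finset.powersetCard k Finset.univ).filter (fun F => K ⊆ F) := by
    ext F
    simp only [Finset.mem_image, Finset.mem_filter, Finset.mem_powersetCard_univ,
      Finset.mem_compl]
    constructor
    · rintro ⟨v, hv, rfl⟩
      refine ⟨by rw [Finset.card_insert_of_notMem hv]; omega, Finset.subset_insert _ _⟩
    · rintro ⟨hFc, hKF⟩
      obtain ⟨v, hv, rfl⟩ := exists_insert_of_card_succ hKF (by omega)
      exact ⟨v, hv, rfl⟩
  rw [← Finset.sum_image hinj, himg]
  exact Finset.sum_subset (Finset.filter_subset _ _)
    (fun F hF hnF => hz F hF (fun hs => hnF (Finset.mem_filter.mpr ⟨hF, hs⟩)))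

lemma psd_sum_sum_nonneg {W : Type} [Fintype W] {M : Matrix W W ℝ} (h : M.PosSemidef) :
    0 ≤ ∑ v, ∑ w, M v w := by
  have h0 := (posSemidef_iff_dotProduct_mulVec.mp h).2 (fun _ => 1)
  simpa [dotProduct, Matrix.mulVec] using h0

lemma psd_diag_nonneg {W : Type} [Fintype W] {M : Matrix W W ℝ} (h : M.PosSemidef) (v : W) :
    0 ≤ M v v := by
  haveI := Classical.decEq W
  have h0 := (posSemidef_iff_dotProduct_mulVec.mp h).2 (fun u => if u = v then 1 else 0)
  simpa [dotProduct, Matrix.mulVec, Finset.sum_ite_eq'] using h0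

lemma psd_trace_nonneg {W : Type} [Fintype W] {M : Matrix W W ℝ} (h : M.PosSemidef) :
    0 ≤ Matrix.trace M :=
  Finset.sum_nonneg fun v _ => psd_diag_nonneg h v

lemma psd_apply_le {W : Type} [Fintype W] {M : Matrix W W ℝ} (h : M.PosSemidef) (v w : W) :
    M v w ≤ (M v v + M w w) / 2 := by
  haveI := Classical.decEq W
  rcases eq_or_ne v w with rfl | hvw
  · linarith
  · have hsym : M v w = M w v := by simpa using h.1.apply w v
    have h0 := (posSemidef_iff_dotProduct_mulVec.mp h).2 (fun u => (if u = v then (1 : ℝ) else 0) - if u = w then 1 else 0)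
    have hcalc : dotProduct
        (star fun u => (if u = v then (1 : ℝ) else 0) - if u = w then 1 else 0)
        (M *ᵥ fun u => (if u = v then (1 : ℝ) else 0) - if u = w then 1 else 0)
        = M v v - M v w - M w v + M w w := by
      simp only [star_trivial, dotProduct, Matrix.mulVec, mul_sub, sub_mul, ite_mul,
        mul_ite, one_mul, zero_mul, mul_one, mul_zero, Finset.sum_sub_distrib,
        Finset.sum_ite_eq', Finset.mem_univ, if_true]
      ring
    rw [hcalc] at h0
    linarith

lemma psd_sum_sum_le {W : Type} [Fintype W] {M : Matrix W W ℝ} (h : M.PosSemidef) :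
    ∑ v, ∑ w, M v w ≤ (Fintype.card W : ℝ) * Matrix.trace M := by
  have step : ∑ v, ∑ w, M v w ≤ ∑ v, ∑ w : W, (M v v + M w w) / 2 :=
    Finset.sum_le_sum fun v _ => Finset.sum_le_sum fun w _ => psd_apply_le h v w
  refine le_trans step (le_of_eq ?_)
  have hrow : ∀ v : W, ∑ w : W, (M v v + M w w) / 2
      = ((Fintype.card W : ℝ) * M v v + Matrix.trace M) / 2 := by
    intro v
    rw [← Finset.sum_div]
    congr 1
    rw [Finset.sum_add_distrib, Finset.sum_const, Finset.card_univ, nsmul_eq_mul]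
    rfl
  rw [Finset.sum_congr rfl (fun v _ => hrow v), ← Finset.sum_div, Finset.sum_add_distrib,
    ← Finset.mul_sum, Finset.sum_const, Finset.card_univ, nsmul_eq_mul]
  have : ∑ v : W, M v v = Matrix.trace M := rfl
  rw [this]
  ring

lemma thetaG_nonneg {W : Type} [Fintype W] (adj : W → W → Prop) : 0 ≤ thetaG adj := by
  apply Real.sSup_nonneg
  rintro t ⟨Z, hZ, -, -, rfl⟩
  exact psd_sum_sum_nonneg hZ

lemma sum_le_thetaG_mul_trace {W : Type} [Fintype W] (adj : W → W → Prop) {Z : Matrix W W ℝ}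
    (hZ : Z.PosSemidef) (hadj : ∀ v w, adj v w → Z v w = 0) :
    ∑ v, ∑ w, Z v w ≤ thetaG adj * Matrix.trace Z := by
  have htr : 0 ≤ Z.trace := psd_trace_nonneg hZ
  rcases htr.eq_or_lt with h0 | h0
  · have hle := psd_sum_sum_le hZ
    rw [← h0, mul_zero] at hle ⊢
    exact hle
  · have hmem : (Matrix.trace Z)⁻¹ * (∑ v, ∑ w, Z v w) ∈
        {t | ∃ Z' : Matrix W W ℝ, Z'.PosSemidef ∧ Matrix.trace Z' = 1 ∧
          (∀ v w, adj v w → Z' v w = 0) ∧ t = ∑ v, ∑ w, Z' v w} := by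
      refine ⟨(Matrix.trace Z)⁻¹ • Z, posSemidef_iff_dotProduct_mulVec.mpr ⟨?_, ?_⟩, ?_, ?_, ?_⟩
      · show ((Matrix.trace Z)⁻¹ • Z)ᴴ = (Matrix.trace Z)⁻¹ • Z
        rw [Matrix.conjTranspose_smul, star_trivial, hZ.1]
      · intro x
        rw [Matrix.smul_mulVec, dotProduct_smul, smul_eq_mul]
        exact mul_nonneg (inv_nonneg.mpr htr) ((posSemidef_iff_dotProduct_mulVec.mp hZ).2 x)
      · rw [Matrix.trace_smul, smul_eq_mul, inv_mul_cancel₀ (ne_of_gt h0)]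
      · intro v w hvw
        show (Matrix.trace Z)⁻¹ • Z v w = 0
        rw [hadj v w hvw, smul_zero]
      · rw [Finset.mul_sum]
        refine Finset.sum_congr rfl fun v _ => ?_
        rw [Finset.mul_sum]
        rfl
    have hbdd : BddAbove {t | ∃ Z' : Matrix W W ℝ, Z'.PosSemidef ∧ Matrix.trace Z' = 1 ∧
        (∀ v w, adj v w → Z' v w = 0) ∧ t = ∑ v, ∑ w, Z' v w} := by
      refine ⟨(Fintype.card W : ℝ), ?_⟩
      rintro t ⟨Z', h1, h2, -, rfl⟩
      have := psd_sum_sum_le h1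
      rwa [h2, mul_one] at this
    have hle : (Matrix.trace Z)⁻¹ * (∑ v, ∑ w, Z v w) ≤ thetaG adj := le_csSup hbdd hmem
    have := mul_le_mul_of_nonneg_left hle htr
    calc ∑ v, ∑ w, Z v w = Matrix.trace Z * ((Matrix.trace Z)⁻¹ * ∑ v, ∑ w, Z v w) := by
          field_simp
      _ ≤ Matrix.trace Z * thetaG adj := this
      _ = thetaG adj * Matrix.trace Z := mul_comm _ _

end AuxLemmas
/-- For a `k`-dimensional simplicial complex `X` with complete
`(k-1)`-skeleton, `ϑ_k(X) ≤ k · max_K ϑ(lk_X(K))`, the maximum being over all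
`(k-2)`-dimensional faces `K` of `X`, where `lk_X(K)` is the link graph of `K` (vertices
`v` with `K ∪ {v} ∈ X_{k-1}`, edges `{v,w}` with `K ∪ {v,w} ∈ X_k`) and `ϑ` is the
Lovász theta number of a graph. (Stated as: `ϑ_k(X) ≤ k·b` for every upper bound `b` of
the theta numbers of the links.) -/
theorem theta_le_link_bound
    {V : Type} [Fintype V] [DecidableEq V] [LinearOrder V] (X : SC V) (k : ℕ)
    (hk : 2 ≤ k) (hkn : k ≤ Fintype.card V)
    (hdim : ∀ F ∈ X.faces, F.card ≤ k + 1)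
    (hskel : ∀ F : Finset V, F.card ≤ k → F ∈ X.faces)
    (b : ℝ)
    (hb : ∀ K ∈ X.dfaces (k - 1),
      thetaG (fun v w : {v : V // insert v K ∈ X.dfaces k} =>
        v ≠ w ∧ insert v.1 (insert w.1 K) ∈ X.dfaces (k + 1)) ≤ b) :
    theta X k ≤ (k : ℝ) * b := by
  have hk1 : 1 ≤ k := by omega
  have hb0 : 0 ≤ b := by
    obtain ⟨K0, -, hK0c⟩ := Finset.exists_subset_card_eq
      (show k - 1 ≤ (Finset.univ : Finset V).card by rw [Finset.card_univ]; omega)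
    have hK0 : K0 ∈ X.dfaces (k - 1) :=
      Finset.mem_filter.mpr ⟨hskel _ (by omega), hK0c⟩
    exact le_trans (thetaG_nonneg _) (hb K0 hK0)
  apply Real.sSup_le _ (mul_nonneg (by positivity) hb0)
  rintro t ⟨Y, ⟨hPSD, htr, hface, hbig, hsymc⟩, rfl⟩
  clear hbig hsymc
  have hTmem : ∀ K : Finset V, K ∈ X.dfaces (k - 1) ↔ K.card = k - 1 := by
    intro K
    simp only [SC.dfaces, Finset.mem_filter]
    exact ⟨fun h => h.2, fun h => ⟨hskel _ (by omega), h⟩⟩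
  have hTeq : X.dfaces (k - 1) = Finset.powersetCard (k - 1) Finset.univ := by
    ext K; rw [hTmem, Finset.mem_powersetCard_univ]
  set P := Finset.powersetCard k (Finset.univ : Finset V) with hP
  set y2 : Finset V → Finset V → ℝ := fun A B =>
    if h : A.card = k ∧ B.card = k then Y ⟨A, h.1⟩ ⟨B, h.2⟩ else 0 with hy2
  set q : Finset V → V → V → ℝ := fun K v w =>
    inc (insert v K) K * inc (insert w K) K * y2 (insert v K) (insert w K) with hq
  have hins : ∀ K : Finset V, K.card = k - 1 →
      ∀ v : V, (insert v K ∈ X.dfaces k ↔ v ∉ K) := by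
    intro K hKc v
    simp only [SC.dfaces, Finset.mem_filter]
    constructor
    · rintro ⟨-, hc⟩ hvK
      rw [Finset.insert_eq_self.mpr hvK] at hc; omega
    · intro hv
      have hcard : (insert v K).card = k := by
        rw [Finset.card_insert_of_notMem hv, hKc]; omega
      exact ⟨hskel _ (le_of_eq hcard), hcard⟩
  -- y2 on subtype elements
  have hy2Y : ∀ (A B : Finset V) (hA : A.card = k) (hB : B.card = k),
      y2 A B = Y ⟨A, hA⟩ ⟨B, hB⟩ := by
    intro A B hA hB
    simp only [hy2]
    rw [dif_pos ⟨hA, hB⟩]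
  -- Step 1: per-link bound
  have step1 : ∀ K ∈ X.dfaces (k - 1),
      (∑ v ∈ Kᶜ, ∑ w ∈ Kᶜ, q K v w) ≤ b * ∑ v ∈ Kᶜ, q K v v := by
    intro K hK
    have hKc : K.card = k - 1 := (hTmem K).mp hK
    have hWt : ∀ v : V, v ∈ Kᶜ ↔ insert v K ∈ X.dfaces k := by
      intro v; rw [Finset.mem_compl, hins K hKc v]
    have hcardW : ∀ v : {v : V // insert v K ∈ X.dfaces k}, (insert v.1 K).card = k :=
      fun v => (Finset.mem_filter.mp v.2).2
    set FK : {v : V // insert v K ∈ X.dfaces k} → KSet V k :=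
      fun v => ⟨insert v.1 K, hcardW v⟩ with hFK
    set Z : Matrix {v : V // insert v K ∈ X.dfaces k} {v : V // insert v K ∈ X.dfaces k} ℝ :=
      fun v w => inc (insert v.1 K) K * inc (insert w.1 K) K * Y (FK v) (FK w) with hZ
    have hqZ : ∀ v w : {v : V // insert v K ∈ X.dfaces k}, q K v.1 w.1 = Z v w := by
      intro v w
      simp only [hq, hZ]
      rw [hy2Y _ _ (hcardW v) (hcardW w)]
    have hZpsd : Z.PosSemidef := by
      set B : Matrix (KSet V k) {v : V // insert v K ∈ X.dfaces k} ℝ :=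
        fun F v => if F = FK v then inc (insert v.1 K) K else 0 with hB
      have hZeq : Z = Bᴴ * Y * B := by
        ext v w
        simp only [Matrix.mul_apply, Matrix.conjTranspose_apply]
        simp only [hZ, hB, Matrix.mul_apply, Matrix.conjTranspose_apply, star_trivial,
          ite_mul, mul_ite, zero_mul, mul_zero, Finset.sum_ite_eq, Finset.sum_ite_eq',
          Finset.mem_univ, if_true]
        ring
      rw [hZeq]
      exact hPSD.conjTranspose_mul_mul_same B
    have hedge : ∀ v w : {v : V // insert v K ∈ X.dfaces k},
        (v ≠ w ∧ insert v.1 (insert w.1 K) ∈ X.dfaces (k + 1)) → Z v w = 0 := by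
      rintro v w ⟨hne, hmem⟩
      have hcup : (FK v).1 ∪ (FK w).1 = insert v.1 (insert w.1 K) := by
        simp only [hFK]
        rw [Finset.insert_union, Finset.union_insert, Finset.union_self]
      have h0 := hface (FK v) (FK w) (by rw [hcup]; exact hmem)
      simp only [hZ, h0, mul_zero]
    have hmain := sum_le_thetaG_mul_trace
      (fun v w : {v : V // insert v K ∈ X.dfaces k} =>
        v ≠ w ∧ insert v.1 (insert w.1 K) ∈ X.dfaces (k + 1)) hZpsd hedge
    have hbK := hb K hK
    have htrZ : 0 ≤ Z.trace := psd_trace_nonneg hZpsd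
    have h2 := mul_le_mul_of_nonneg_right hbK htrZ
    have hL : ∑ v ∈ Kᶜ, ∑ w ∈ Kᶜ, q K v w = ∑ v, ∑ w, Z v w := by
      rw [Finset.sum_subtype Kᶜ hWt (fun v => ∑ w ∈ Kᶜ, q K v w)]
      refine Finset.sum_congr rfl fun v _ => ?_
      rw [Finset.sum_subtype Kᶜ hWt (fun w => q K v.1 w)]
      exact Finset.sum_congr rfl fun w _ => hqZ v w
    have hR : ∑ v ∈ Kᶜ, q K v v = Z.trace := by
      rw [Finset.sum_subtype Kᶜ hWt (fun v => q K v v)]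
      exact Finset.sum_congr rfl fun v _ => hqZ v v
    rw [hL, hR]
    exact le_trans hmain h2
  -- Step 2: the decomposition identity
  have step2 : ∑ K ∈ X.dfaces (k - 1), ∑ v ∈ Kᶜ, ∑ w ∈ Kᶜ, q K v w
      = Matrix.trace (Lc V k * Y) := by
    have hKK : ∀ K ∈ X.dfaces (k - 1), ∑ v ∈ Kᶜ, ∑ w ∈ Kᶜ, q K v w
        = ∑ F ∈ P, ∑ F' ∈ P, inc F K * inc F' K * y2 F F' := by
      intro K hK
      have hKc : K.card = k - 1 := (hTmem K).mp hK
      have inner : ∀ v : V, ∑ w ∈ Kᶜ, q K v w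
          = ∑ F' ∈ P, inc (insert v K) K * inc F' K * y2 (insert v K) F' := by
        intro v
        exact sum_insert_compl hk1 hKc
          (fun F' => inc (insert v K) K * inc F' K * y2 (insert v K) F')
          (fun F' _ hn => by
            show inc (insert v K) K * inc F' K * y2 (insert v K) F' = 0
            rw [inc_of_not_subset hn, mul_zero, zero_mul])
      rw [Finset.sum_congr rfl (fun v _ => inner v)]
      exact sum_insert_compl hk1 hKc
        (fun F => ∑ F' ∈ P, inc F K * inc F' K * y2 F F')
        (fun F _ hn => by
          show (∑ F' ∈ P, inc F K * inc F' K * y2 F F') = 0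
          exact Finset.sum_eq_zero fun F' _ => by
            rw [inc_of_not_subset hn, zero_mul, zero_mul])
    rw [Finset.sum_congr rfl hKK, Finset.sum_comm]
    have hswap : ∀ F ∈ P, ∑ K ∈ X.dfaces (k - 1), ∑ F' ∈ P, inc F K * inc F' K * y2 F F'
        = ∑ F' ∈ P, (if F = F' then (k : ℝ) else eps F F') * y2 F F' := by
      intro F hF
      rw [Finset.sum_comm]
      refine Finset.sum_congr rfl fun F' hF' => ?_
      have hks : (∑ K ∈ X.dfaces (k - 1), inc F K * inc F' K)
          = if F = F' then (k : ℝ) else eps F F' := by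
        rw [hTeq]
        exact key_sum hk1 (Finset.mem_powersetCard_univ.mp hF)
          (Finset.mem_powersetCard_univ.mp hF')
      rw [← hks, Finset.sum_mul]
    rw [Finset.sum_congr rfl hswap]
    -- now identify with trace (Lc * Y)
    have htrace : Matrix.trace (Lc V k * Y)
        = ∑ F ∈ P, ∑ F' ∈ P, (if F = F' then (k : ℝ) else eps F F') * y2 F F' := by
      rw [Finset.sum_subtype P (fun F => Finset.mem_powersetCard_univ)
        (fun F => ∑ F' ∈ P, (if F = F' then (k : ℝ) else eps F F') * y2 F F')]
      simp only [Matrix.trace, Matrix.diag, Matrix.mul_apply]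
      refine Finset.sum_congr rfl fun F _ => ?_
      rw [Finset.sum_subtype P (fun F' => Finset.mem_powersetCard_univ)
        (fun F' => (if F.1 = F' then (k : ℝ) else eps F.1 F') * y2 F.1 F')]
      refine Finset.sum_congr rfl fun F' _ => ?_
      rw [hy2Y _ _ F.2 F'.2]
      have hYsym : Y F' F = Y F F' := by simpa using (hPSD.1.apply F' F).symm
      simp only [Subtype.coe_eta]
      rw [hYsym, Lc]
      congr 1
      exact if_congr Subtype.ext_iff rfl rfl
    rw [htrace]
  -- Step 3: total trace
  have step3 : ∑ K ∈ X.dfaces (k - 1), ∑ v ∈ Kᶜ, q K v v = (k : ℝ) := by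
    have hKK : ∀ K ∈ X.dfaces (k - 1), ∑ v ∈ Kᶜ, q K v v
        = ∑ F ∈ P, inc F K * inc F K * y2 F F := by
      intro K hK
      have hKc : K.card = k - 1 := (hTmem K).mp hK
      exact sum_insert_compl hk1 hKc (fun F => inc F K * inc F K * y2 F F)
        (fun F _ hn => by
          show inc F K * inc F K * y2 F F = 0
          rw [inc_of_not_subset hn, zero_mul, zero_mul])
    rw [Finset.sum_congr rfl hKK, Finset.sum_comm]
    have hcol : ∀ F ∈ P, ∑ K ∈ X.dfaces (k - 1), inc F K * inc F K * y2 F F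
        = (k : ℝ) * y2 F F := by
      intro F hF
      have hks : (∑ K ∈ X.dfaces (k - 1), inc F K * inc F K) = (k : ℝ) := by
        rw [hTeq]
        exact (key_sum hk1 (Finset.mem_powersetCard_univ.mp hF)
          (Finset.mem_powersetCard_univ.mp hF)).trans (if_pos rfl)
      rw [← hks, Finset.sum_mul]
    rw [Finset.sum_congr rfl hcol, ← Finset.mul_sum]
    have htrY : ∑ F ∈ P, y2 F F = 1 := by
      rw [Finset.sum_subtype P (fun F => Finset.mem_powersetCard_univ) (fun F => y2 F F)]
      rw [← htr]
      refine Finset.sum_congr rfl fun F _ => ?_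
      rw [hy2Y _ _ F.2 F.2]
      simp only [Subtype.coe_eta]
      rfl
    rw [htrY, mul_one]
  calc Matrix.trace (Lc V k * Y)
      = ∑ K ∈ X.dfaces (k - 1), ∑ v ∈ Kᶜ, ∑ w ∈ Kᶜ, q K v w := step2.symm
    _ ≤ ∑ K ∈ X.dfaces (k - 1), b * ∑ v ∈ Kᶜ, q K v v := Finset.sum_le_sum step1
    _ = b * ∑ K ∈ X.dfaces (k - 1), ∑ v ∈ Kᶜ, q K v v := by rw [← Finset.mul_sum]
    _ = b * k := by rw [step3]
    _ = (k : ℝ) * b := mul_comm b k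
end

section
/- Let X be a pure k-dimensional complex on n vertices with complete (k-1)-skeleton, and let Ā be the adjacency matrix of the complementary complex X̄. Then ϑ_k(X) ≥ k·(1 + (k+1)·|X̄_k| / (−binom(n,k)·λ_min(Ā))), provided λ_min(Ā) < 0. -/
open Finset Matrix

variable {V : Type} [Fintype V] [DecidableEq V] [LinearOrder V]

/-- The adjacency matrix of the complementary complex `X̄` of a pure `k`-dimensional
complex `X`, indexed by all `k`-subsets: `Ā_{F,F'} = ε_{F,F'}` if `F ∪ F'` is a
`(k+1)`-set that is not a face of `X`, and `0` otherwise. -/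
def adjCompl (X : SC V) (k : ℕ) : Matrix (KSet V k) (KSet V k) ℝ :=
  fun F F' =>
    if (F.1 ∪ F'.1).card = k + 1 ∧ F.1 ∪ F'.1 ∉ X.faces then eps F.1 F'.1 else 0


section AuxSpectral

variable {ι : Type} [Fintype ι] [DecidableEq ι]

lemma aux_eig_set_eq {M : Matrix ι ι ℝ} (hM : M.IsHermitian) :
    {μ : ℝ | Module.End.HasEigenvalue (Matrix.mulVecLin M) μ} = Set.range hM.eigenvalues := by
  ext μ
  constructor
  · intro h
    have h : Module.End.eigenspace (Matrix.mulVecLin M : Module.End ℝ (ι → ℝ)) μ ≠ ⊥ := h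
    rw [Submodule.ne_bot_iff] at h
    obtain ⟨v, hv, hv0⟩ := h
    rw [Module.End.mem_eigenspace_iff] at hv
    simp only [Matrix.mulVecLin_apply] at hv
    set U : Matrix ι ι ℝ := (hM.eigenvectorUnitary : Matrix ι ι ℝ) with hU
    have hUU : U * star U = 1 := (Matrix.mem_unitaryGroup_iff).mp hM.eigenvectorUnitary.2
    have hUU' : star U * U = 1 := (Matrix.mem_unitaryGroup_iff').mp hM.eigenvectorUnitary.2
    set w : ι → ℝ := star U *ᵥ v with hw
    have hw0 : w ≠ 0 := by
      intro h0
      apply hv0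
      have : U *ᵥ w = v := by
        rw [hw, Matrix.mulVec_mulVec, hUU, Matrix.one_mulVec]
      rw [h0, Matrix.mulVec_zero] at this
      exact this.symm
    have hdiag : Matrix.diagonal hM.eigenvalues *ᵥ w = μ • w := by
      have hspec := hM.spectral_theorem
      have : star U *ᵥ (M *ᵥ v) = star U *ᵥ (μ • v) := by rw [hv]
      rw [Matrix.mulVec_smul] at this
      calc Matrix.diagonal hM.eigenvalues *ᵥ w
          = (Matrix.diagonal hM.eigenvalues * (star U * U)) *ᵥ w := by rw [hUU', Matrix.mul_one]
        _ = ((Matrix.diagonal hM.eigenvalues * star U) * U) *ᵥ w := by rw [Matrix.mul_assoc]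
        _ = μ • w := by
            rw [hw, Matrix.mulVec_mulVec]
            have : ((Matrix.diagonal hM.eigenvalues * star U) * U) * star U
                = star U * M := by
              conv_rhs => rw [hspec, Unitary.conjStarAlgAut_apply]
              have h1 : Matrix.diagonal ((RCLike.ofReal : ℝ → ℝ) ∘ hM.eigenvalues)
                  = Matrix.diagonal hM.eigenvalues := by
                rfl
              simp only [← hU, h1, ← Matrix.mul_assoc]
              rw [Matrix.mul_assoc (Matrix.diagonal hM.eigenvalues) (star U) U, hUU',
                Matrix.mul_one, Matrix.one_mul]
            rw [this, ← Matrix.mulVec_mulVec, hv, Matrix.mulVec_smul]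
    obtain ⟨i, hi⟩ := Function.ne_iff.mp hw0
    refine ⟨i, ?_⟩
    have := congrFun hdiag i
    rw [Matrix.mulVec_diagonal] at this
    simp only [Pi.smul_apply, smul_eq_mul] at this
    exact mul_right_cancel₀ hi this
  · rintro ⟨i, rfl⟩
    have hv := hM.mulVec_eigenvectorBasis i
    set v : ι → ℝ := ⇑(hM.eigenvectorBasis i) with hvdef
    have hne : v ≠ 0 := by
      intro h0
      apply hM.eigenvectorBasis.orthonormal.ne_zero i
      ext j
      exact congrFun h0 j
    exact Module.End.hasEigenvalue_of_hasEigenvector (x := v)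
      ⟨Module.End.mem_eigenspace_iff.mpr (by simpa [Matrix.mulVecLin_apply] using hv), hne⟩

lemma aux_lambdaMin_le {M : Matrix ι ι ℝ} (hM : M.IsHermitian) (i : ι) :
    lambdaMin M ≤ hM.eigenvalues i := by
  rw [lambdaMin, aux_eig_set_eq hM]
  exact csInf_le (Set.finite_range _).bddBelow ⟨i, rfl⟩

lemma aux_psd_sub_lambdaMin {M : Matrix ι ι ℝ} (hM : M.IsHermitian) :
    (M - lambdaMin M • (1 : Matrix ι ι ℝ)).PosSemidef := by
  set c := lambdaMin M
  set U : Matrix ι ι ℝ := (hM.eigenvectorUnitary : Matrix ι ι ℝ) with hU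
  have hUU : U * star U = 1 := (Matrix.mem_unitaryGroup_iff).mp hM.eigenvectorUnitary.2
  have key : M - c • (1 : Matrix ι ι ℝ)
      = U * Matrix.diagonal (fun i => hM.eigenvalues i - c) * Uᴴ := by
    have hspec := hM.spectral_theorem
    have h1 : Matrix.diagonal ((RCLike.ofReal : ℝ → ℝ) ∘ hM.eigenvalues)
        = Matrix.diagonal hM.eigenvalues := by rfl
    have hd : Matrix.diagonal (fun i => hM.eigenvalues i - c)
        = Matrix.diagonal hM.eigenvalues - c • (1 : Matrix ι ι ℝ) := by
      rw [← Matrix.diagonal_one, ← Matrix.diagonal_smul, ← Matrix.diagonal_sub]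
      congr 1
      ext i j
      by_cases hij : i = j <;>
        simp [Matrix.diagonal, Matrix.one_apply, Matrix.smul_apply, hij]
    rw [hd, Matrix.mul_sub, Matrix.sub_mul]
    have h2 : U * (c • (1 : Matrix ι ι ℝ)) * Uᴴ = c • (1 : Matrix ι ι ℝ) := by
      rw [Matrix.mul_smul, Matrix.mul_one, Matrix.smul_mul]
      rw [← Matrix.star_eq_conjTranspose, hUU]
    rw [h2]
    have : M = U * Matrix.diagonal hM.eigenvalues * Uᴴ := by
      conv_lhs => rw [hspec, Unitary.conjStarAlgAut_apply, h1]
      rw [← hU, Matrix.star_eq_conjTranspose]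
    exact sub_left_inj.mpr this
  rw [key]
  exact (Matrix.posSemidef_diagonal_iff.mpr fun i => by
    simpa using aux_lambdaMin_le hM i).mul_mul_conjTranspose_same U

lemma aux_psd_diag_nonneg {Z : Matrix ι ι ℝ}
    (hZ : Z.PosSemidef) (l : ι) : 0 ≤ Z l l := by
  have h := hZ.dotProduct_mulVec_nonneg (Pi.single l 1)
  simpa [dotProduct, Matrix.mulVec, Pi.single_apply, mul_ite, ite_mul,
    Finset.sum_ite_eq', Finset.sum_ite_eq] using h

lemma aux_psd_entry_bound {Z : Matrix ι ι ℝ}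
    (hZ : Z.PosSemidef) (ht : Matrix.trace Z = 1) (i j : ι) : |Z i j| ≤ 1 := by
  have hdiag : ∀ l, 0 ≤ Z l l := aux_psd_diag_nonneg hZ
  have htr : ∀ l, Z l l ≤ 1 := by
    intro l
    rw [← ht, Matrix.trace]
    exact Finset.single_le_sum (f := fun m => Z m m) (fun m _ => hdiag m) (Finset.mem_univ l)
  by_cases hij : i = j
  · subst hij
    rw [abs_le]; exact ⟨by linarith [hdiag i], htr i⟩
  · have hsym : Z j i = Z i j := by
      have := congrFun (congrFun hZ.1 i) j
      simpa [Matrix.conjTranspose_apply] using this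
    have quad : ∀ ε : ℝ, 0 ≤ Z i i + ε * Z i j + ε * Z j i + ε * ε * Z j j := by
      intro ε
      set x : ι → ℝ := fun l => (if l = i then 1 else 0) + ε * (if l = j then 1 else 0) with hx
      have h := hZ.dotProduct_mulVec_nonneg x
      have hsx : star x = x := funext fun l => star_trivial _
      rw [hsx] at h
      have hcalc : dotProduct x (Z *ᵥ x)
          = Z i i + ε * Z i j + ε * Z j i + ε * ε * Z j j := by
        simp only [dotProduct, Matrix.mulVec, hx, mul_add, add_mul, mul_ite, ite_mul,
          mul_one, one_mul, mul_zero, zero_mul, Finset.sum_add_distrib, Finset.mul_sum,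
          Finset.sum_ite_eq', Finset.mem_univ, if_true, if_neg hij, if_neg (Ne.symm hij)]
        ring
      rw [hcalc] at h
      exact h
    have q1 := quad 1
    have q2 := quad (-1)
    rw [hsym] at q1 q2
    rw [abs_le]
    constructor <;> nlinarith [htr i, htr j, hdiag i, hdiag j]

end AuxSpectral

section AuxComb

lemma aux_inc_mul_self {V : Type} [DecidableEq V] [LinearOrder V] {F K : Finset V}
    (hKF : K ⊆ F) (hc : F.card = K.card + 1) : inc F K * inc F K = 1 := by
  rw [inc, if_pos ⟨hKF, hc⟩]
  have h1 : (F \ K).card = 1 := by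
    rw [card_sdiff_of_subset hKF, hc]; omega
  obtain ⟨a, ha⟩ := Finset.card_eq_one.mp h1
  rw [ha, Finset.sum_singleton, ← pow_add, ← two_mul, pow_mul]
  norm_num

lemma aux_eps_mul_self {V : Type} [DecidableEq V] [LinearOrder V] {F F' : Finset V} {k : ℕ}
    (hF : F.card = k) (hF' : F'.card = k) (hU : (F ∪ F').card = k + 1) :
    eps F F' * eps F F' = 1 := by
  have key := Finset.card_inter_add_card_union F F'
  have h1 : F.card = (F ∩ F').card + 1 := by omega
  have h2 : F'.card = (F ∩ F').card + 1 := by omega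
  have e1 := aux_inc_mul_self (Finset.inter_subset_left (s₁ := F) (s₂ := F')) h1
  have e2 := aux_inc_mul_self (Finset.inter_subset_right (s₁ := F) (s₂ := F')) h2
  calc eps F F' * eps F F'
      = (inc F (F ∩ F') * inc F (F ∩ F')) * (inc F' (F ∩ F') * inc F' (F ∩ F')) := by
        rw [eps]; ring
    _ = 1 := by rw [e1, e2, one_mul]

lemma aux_eps_comm {V : Type} [DecidableEq V] [LinearOrder V] (F F' : Finset V) :
    eps F F' = eps F' F := by
  rw [eps, eps, Finset.inter_comm, mul_comm]

variable {V : Type} [Fintype V] [DecidableEq V] [LinearOrder V]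

lemma aux_union_card_ge {F F' : Finset V} {k : ℕ} (hF : F.card = k) (hF' : F'.card = k)
    (hne : F ≠ F') : k + 1 ≤ (F ∪ F').card := by
  by_contra h
  push_neg at h
  have h1 : F = F ∪ F' :=
    Finset.eq_of_subset_of_card_le Finset.subset_union_left (by omega)
  have h2 : F' = F ∪ F' :=
    Finset.eq_of_subset_of_card_le Finset.subset_union_right (by omega)
  exact hne (h1.trans h2.symm)

lemma aux_erase_inj_on {H : Finset V} {x x' : V} (hx : x ∈ H)
    (h : H.erase x = H.erase x') : x = x' := by
  by_contra hne
  have : x ∈ H.erase x' := Finset.mem_erase.mpr ⟨hne, hx⟩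
  rw [← h] at this
  exact (Finset.mem_erase.mp this).1 rfl

lemma aux_fiber_card (X : SC V) (k : ℕ) (H : Finset V) (hH : H.card = k + 1) :
    ((univ : Finset (KSet V k × KSet V k)).filter
        (fun p => ((p.1.1 ∪ p.2.1).card = k + 1 ∧ p.1.1 ∪ p.2.1 ∉ X.faces) ∧ p.1.1 ∪ p.2.1 = H)).card
      = (if H ∉ X.faces then (k+1) * k else 0) := by
  by_cases hf : H ∉ X.faces
  · rw [if_pos hf]
    have hcard : H.offDiag.card = (k+1) * k := by
      rw [Finset.offDiag_card, hH]; ring_nf; omega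
    rw [← hcard]
    symm
    apply Finset.card_bij (fun (a : V × V) (ha : a ∈ H.offDiag) =>
      ((⟨H.erase a.1, by
          rw [Finset.card_erase_of_mem (Finset.mem_offDiag.mp ha).1, hH]; omega⟩,
        ⟨H.erase a.2, by
          rw [Finset.card_erase_of_mem (Finset.mem_offDiag.mp ha).2.1, hH]; omega⟩) :
        KSet V k × KSet V k))
    · intro a ha
      obtain ⟨h1, h2, h3⟩ := Finset.mem_offDiag.mp ha
      have hun : H.erase a.1 ∪ H.erase a.2 = H := by
        ext z
        simp only [Finset.mem_union, Finset.mem_erase]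
        constructor
        · rintro (⟨_, hz⟩ | ⟨_, hz⟩) <;> exact hz
        · intro hz
          by_cases hza : z = a.1
          · right; exact ⟨by rw [hza]; exact h3, hz⟩
          · left; exact ⟨hza, hz⟩
      simp only [Finset.mem_filter, Finset.mem_univ, true_and]
      exact ⟨⟨by rw [hun, hH], by rw [hun]; exact hf⟩, hun⟩
    · intro a ha b hb hab
      obtain ⟨ha1, ha2, _⟩ := Finset.mem_offDiag.mp ha
      obtain ⟨hb1, hb2, _⟩ := Finset.mem_offDiag.mp hb
      have h1 := congrArg (fun p => (p.1 : KSet V k).1) hab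
      have h2 := congrArg (fun p => (p.2 : KSet V k).1) hab
      simp only at h1 h2
      exact Prod.ext (aux_erase_inj_on ha1 h1) (aux_erase_inj_on ha2 h2)
    · rintro ⟨F, F'⟩ hp
      simp only [Finset.mem_filter, Finset.mem_univ, true_and] at hp
      obtain ⟨⟨hc, hnf⟩, hun⟩ := hp
      have hFH : F.1 ⊆ H := hun ▸ Finset.subset_union_left
      have hF'H : F'.1 ⊆ H := hun ▸ Finset.subset_union_right
      have hx1 : (H \ F.1).card = 1 := by
        rw [Finset.card_sdiff_of_subset hFH, hH, F.2]; omega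
      have hy1 : (H \ F'.1).card = 1 := by
        rw [Finset.card_sdiff_of_subset hF'H, hH, F'.2]; omega
      obtain ⟨x, hx⟩ := Finset.card_eq_one.mp hx1
      obtain ⟨y, hy⟩ := Finset.card_eq_one.mp hy1
      have hxH : x ∈ H := by
        have : x ∈ H \ F.1 := hx ▸ Finset.mem_singleton_self x
        exact (Finset.mem_sdiff.mp this).1
      have hyH : y ∈ H := by
        have : y ∈ H \ F'.1 := hy ▸ Finset.mem_singleton_self y
        exact (Finset.mem_sdiff.mp this).1
      have hFx : F.1 = H.erase x := by
        rw [Finset.erase_eq, ← hx, Finset.sdiff_sdiff_self_left,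
          Finset.inter_eq_right.mpr hFH]
      have hF'y : F'.1 = H.erase y := by
        rw [Finset.erase_eq, ← hy, Finset.sdiff_sdiff_self_left,
          Finset.inter_eq_right.mpr hF'H]
      have hxy : x ≠ y := by
        intro hxyeq
        subst hxyeq
        have hFF' : F = F' := Subtype.ext (by rw [hFx, hF'y])
        rw [hFF', Finset.union_self] at hun
        have := F'.2
        rw [hun] at this
        omega
      refine ⟨(x, y), Finset.mem_offDiag.mpr ⟨hxH, hyH, hxy⟩, ?_⟩
      exact Prod.ext (Subtype.ext hFx.symm) (Subtype.ext hF'y.symm)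
  · rw [if_neg hf]
    rw [Finset.card_eq_zero]
    rw [Finset.filter_eq_empty_iff]
    rintro p -
    rintro ⟨⟨-, hnf⟩, hun⟩
    rw [hun] at hnf
    exact hf hnf

lemma aux_count_pairs (X : SC V) (k : ℕ) :
    ((univ : Finset (KSet V k × KSet V k)).filter
        (fun p => (p.1.1 ∪ p.2.1).card = k + 1 ∧ p.1.1 ∪ p.2.1 ∉ X.faces)).card
      = (univ.filter fun H : Finset V => H.card = k + 1 ∧ H ∉ X.faces).card * ((k+1) * k) := by
  rw [Finset.card_eq_sum_card_fiberwise
    (f := fun p : KSet V k × KSet V k => p.1.1 ∪ p.2.1)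
    (t := univ.filter fun H : Finset V => H.card = k + 1 ∧ H ∉ X.faces)
    (fun p hp => by
      simp only [Finset.mem_coe, Finset.mem_filter, Finset.mem_univ, true_and] at hp ⊢
      exact hp)]
  apply Finset.sum_const_nat
  intro H hH
  simp only [Finset.mem_filter, Finset.mem_univ, true_and] at hH
  have := aux_fiber_card X k H hH.1
  rw [if_pos hH.2] at this
  rw [Finset.filter_filter]
  exact this

lemma aux_adjCompl_herm (X : SC V) (k : ℕ) : (adjCompl X k).IsHermitian := by
  show (adjCompl X k)ᴴ = adjCompl X k
  ext F F'
  rw [Matrix.conjTranspose_apply]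
  show star (adjCompl X k F' F) = adjCompl X k F F'
  rw [star_trivial]
  rw [adjCompl, adjCompl]
  simp only [Finset.union_comm F'.1 F.1]
  rw [aux_eps_comm F'.1 F.1]

lemma aux_entry_eq (X : SC V) (k : ℕ) (F F' : KSet V k) :
    Lc V k F F' * adjCompl X k F' F =
      if (F.1 ∪ F'.1).card = k + 1 ∧ F.1 ∪ F'.1 ∉ X.faces then (1:ℝ) else 0 := by
  by_cases hcond : (F.1 ∪ F'.1).card = k + 1 ∧ F.1 ∪ F'.1 ∉ X.faces
  · rw [if_pos hcond]
    have hne : F ≠ F' := by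
      intro h
      subst h
      rw [Finset.union_self, F.2] at hcond
      omega
    rw [Lc, if_neg hne, adjCompl, if_pos (by rwa [Finset.union_comm])]
    rw [aux_eps_comm F'.1 F.1]
    exact aux_eps_mul_self F.2 F'.2 hcond.1
  · rw [if_neg hcond, adjCompl, if_neg (by rwa [Finset.union_comm]), mul_zero]

end AuxComb

/-- For a pure `k`-dimensional complex `X` on `n` vertices with
complete `(k-1)`-skeleton, and `Ā` the adjacency matrix of the complementary complex
`X̄`, one has `ϑ_k(X) ≥ k(1 + (k+1)|X̄_k|/(−binom(n,k)·λ_min(Ā)))`, provided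
`λ_min(Ā) < 0`. -/
theorem theta_lower_bound_complement
    {V : Type} [Fintype V] [DecidableEq V] [LinearOrder V] (X : SC V) (k : ℕ)
    (hk : 1 ≤ k) (hkn : k ≤ Fintype.card V) (hpure : X.Pure k)
    (hskel : ∀ F : Finset V, F.card ≤ k → F ∈ X.faces)
    (hmin : lambdaMin (adjCompl X k) < 0) :
    (k : ℝ) * (1 + ((k : ℝ) + 1) *
        ((univ.filter fun H : Finset V => H.card = k + 1 ∧ H ∉ X.faces).card : ℝ) /
        (-(((Fintype.card V).choose k : ℕ) : ℝ) * lambdaMin (adjCompl X k))) ≤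
      theta X k := by
  classical
  set M := adjCompl X k with hMdef
  have hherm : M.IsHermitian := aux_adjCompl_herm X k
  set lam := lambdaMin M with hlamdef
  set n := Fintype.card V with hn
  have hNcard : Fintype.card (KSet V k) = n.choose k := Fintype.card_finset_len k
  have hNpos : 0 < n.choose k := Nat.choose_pos hkn
  have hNR : (0:ℝ) < (n.choose k : ℝ) := by exact_mod_cast hNpos
  set c : ℝ := -(n.choose k : ℝ) * lam with hc
  have hcpos : 0 < c := by
    rw [hc]; nlinarith [hmin]
  set m : ℕ := (univ.filter fun H : Finset V => H.card = k + 1 ∧ H ∉ X.faces).card with hm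
  set Y : Matrix (KSet V k) (KSet V k) ℝ := c⁻¹ • (M - lam • 1) with hYdef
  have hpsd0 : (M - lam • (1 : Matrix (KSet V k) (KSet V k) ℝ)).PosSemidef :=
    aux_psd_sub_lambdaMin hherm
  have hpsd : Y.PosSemidef := by
    refine Matrix.PosSemidef.of_dotProduct_mulVec_nonneg ?_ ?_
    · show Yᴴ = Y
      rw [hYdef, Matrix.conjTranspose_smul, hpsd0.1, star_trivial]
    · intro x
      rw [hYdef, Matrix.smul_mulVec, dotProduct_smul]
      exact smul_nonneg (inv_nonneg.mpr hcpos.le) (hpsd0.dotProduct_mulVec_nonneg x)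
  -- diagonal of M vanishes
  have hMdiag : ∀ F : KSet V k, M F F = 0 := by
    intro F
    show adjCompl X k F F = 0
    rw [adjCompl, if_neg]
    rw [Finset.union_self, F.2]
    intro h
    omega
  -- trace of Y
  have htrM : Matrix.trace M = 0 := by
    rw [Matrix.trace]
    exact Finset.sum_eq_zero fun F _ => hMdiag F
  have hcastN : ((Fintype.card (KSet V k) : ℕ) : ℝ) = (n.choose k : ℝ) := by
    exact_mod_cast congrArg (fun x : ℕ => (x : ℝ)) hNcard
  have htrY : Matrix.trace Y = 1 := by
    rw [hYdef, Matrix.trace_smul, Matrix.trace_sub, Matrix.trace_smul, Matrix.trace_one,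
      htrM, hcastN]
    have h0 : (0:ℝ) - lam • (n.choose k : ℝ) = c := by rw [hc]; simp [smul_eq_mul]; ring
    rw [h0, smul_eq_mul, inv_mul_cancel₀ hcpos.ne']
  -- entries of Y off the diagonal
  have hEntry : ∀ F F' : KSet V k, F ≠ F' → Y F F' = c⁻¹ * M F F' := by
    intro F F' hne
    rw [hYdef]
    simp only [Matrix.smul_apply, Matrix.sub_apply, Matrix.one_apply_ne hne, smul_eq_mul,
      mul_zero, sub_zero]
  -- feasibility conditions
  have hfeas : thetaFeasible X k Y := by
    refine ⟨hpsd, htrY, ?_, ?_, ?_⟩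
    · intro F F' hmem
      rw [SC.dfaces, Finset.mem_filter] at hmem
      have hne : F ≠ F' := by
        intro h
        subst h
        rw [Finset.union_self, F.2] at hmem
        omega
      rw [hEntry F F' hne]
      have : M F F' = 0 := by
        show adjCompl X k F F' = 0
        rw [adjCompl, if_neg]
        rintro ⟨-, hnf⟩
        exact hnf hmem.1
      rw [this, mul_zero]
    · intro F F' hcard
      have hne : F ≠ F' := by
        intro h
        subst h
        rw [Finset.union_self, F.2] at hcard
        omega
      rw [hEntry F F' hne]
      have : M F F' = 0 := by
        show adjCompl X k F F' = 0
        rw [adjCompl, if_neg]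
        rintro ⟨hcc, -⟩
        omega
      rw [this, mul_zero]
    · intro F F' G G' hUnion
      by_cases hFF : F = F'
      · subst hFF
        rw [Finset.union_self] at hUnion
        have hG : G.1 ⊆ F.1 := by rw [hUnion]; exact Finset.subset_union_left
        have hG' : G'.1 ⊆ F.1 := by rw [hUnion]; exact Finset.subset_union_right
        have hGeq : G = F := Subtype.ext
          (Finset.eq_of_subset_of_card_le hG (le_of_eq (by rw [F.2, G.2])))
        have hG'eq : G' = F := Subtype.ext
          (Finset.eq_of_subset_of_card_le hG' (le_of_eq (by rw [F.2, G'.2])))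
        rw [hGeq, hG'eq]
      · have hcard : k + 1 ≤ (F.1 ∪ F'.1).card :=
          aux_union_card_ge F.2 F'.2 (fun h => hFF (Subtype.ext h))
        have hGG : G ≠ G' := by
          intro h
          subst h
          rw [Finset.union_self] at hUnion
          rw [hUnion, G.2] at hcard
          omega
        have key : ∀ P P' : KSet V k, P.1 ∪ P'.1 = F.1 ∪ F'.1 → P ≠ P' →
            eps P.1 P'.1 * Y P P' =
              (if (F.1 ∪ F'.1).card = k + 1 ∧ F.1 ∪ F'.1 ∉ X.faces then c⁻¹ else 0) := by
          intro P P' hu hne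
          rw [hEntry P P' hne]
          show eps P.1 P'.1 * (c⁻¹ * adjCompl X k P P') = _
          rw [adjCompl]
          by_cases hcond : (P.1 ∪ P'.1).card = k + 1 ∧ P.1 ∪ P'.1 ∉ X.faces
          · rw [if_pos hcond, if_pos (hu ▸ hcond)]
            have heps := aux_eps_mul_self P.2 P'.2 hcond.1
            rw [mul_comm c⁻¹, ← mul_assoc, heps, one_mul]
          · rw [if_neg hcond, if_neg (hu ▸ hcond), mul_zero, mul_zero]
        rw [key F F' rfl hFF, key G G' hUnion.symm hGG]
  -- trace of Lc * M
  have hLcM : Matrix.trace (Lc V k * M) = (m : ℝ) * ((k:ℝ) + 1) * (k:ℝ) := by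
    rw [Matrix.trace]
    have step : ∀ F : KSet V k, (Lc V k * M).diag F
        = ∑ F' : KSet V k,
            (if (F.1 ∪ F'.1).card = k + 1 ∧ F.1 ∪ F'.1 ∉ X.faces then (1:ℝ) else 0) := by
      intro F
      rw [Matrix.diag_apply, Matrix.mul_apply]
      exact Finset.sum_congr rfl fun F' _ => aux_entry_eq X k F F'
    rw [Finset.sum_congr rfl fun F _ => step F]
    rw [← Fintype.sum_prod_type']
    rw [Finset.sum_boole]
    have := aux_count_pairs X k
    rw [← hm] at this
    rw [this]
    push_cast
    ring
  -- trace of Lc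
  have htrLc : Matrix.trace (Lc V k) = (n.choose k : ℝ) * (k:ℝ) := by
    rw [Matrix.trace]
    have step : ∀ F : KSet V k, (Lc V k).diag F = (k:ℝ) := by
      intro F
      rw [Matrix.diag_apply, Lc, if_pos rfl]
    rw [Finset.sum_congr rfl fun F _ => step F, Finset.sum_const, Finset.card_univ, hNcard,
      nsmul_eq_mul]
  -- the value of the objective at Y
  have hLcY : Matrix.trace (Lc V k * Y)
      = c⁻¹ * ((m : ℝ) * ((k:ℝ) + 1) * (k:ℝ) - lam * ((n.choose k : ℝ) * (k:ℝ))) := by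
    rw [hYdef, Matrix.mul_smul, Matrix.mul_sub, Matrix.mul_smul, Matrix.mul_one,
      Matrix.trace_smul, Matrix.trace_sub, Matrix.trace_smul, hLcM, htrLc,
      smul_eq_mul, smul_eq_mul]
  -- the bound
  have hbdd : BddAbove {t | ∃ Y, thetaFeasible X k Y ∧ Matrix.trace (Lc V k * Y) = t} := by
    refine ⟨∑ F : KSet V k, ∑ F' : KSet V k, |Lc V k F F'|, ?_⟩
    rintro t ⟨Z, hZ, rfl⟩
    rw [Matrix.trace]
    refine le_trans (Finset.sum_le_sum fun F _ => ?_) le_rfl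
    rw [Matrix.diag_apply, Matrix.mul_apply]
    refine Finset.sum_le_sum fun F' _ => ?_
    calc Lc V k F F' * Z F' F ≤ |Lc V k F F' * Z F' F| := le_abs_self _
      _ = |Lc V k F F'| * |Z F' F| := abs_mul _ _
      _ ≤ |Lc V k F F'| * 1 :=
          mul_le_mul_of_nonneg_left (aux_psd_entry_bound hZ.1 hZ.2.1 F' F) (abs_nonneg _)
      _ = |Lc V k F F'| := mul_one _
  have hmem : Matrix.trace (Lc V k * Y)
      ∈ {t | ∃ Y, thetaFeasible X k Y ∧ Matrix.trace (Lc V k * Y) = t} :=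
    ⟨Y, hfeas, rfl⟩
  have hle : Matrix.trace (Lc V k * Y) ≤ theta X k := le_csSup hbdd hmem
  refine le_trans (le_of_eq ?_) hle
  rw [hLcY]
  have h2 : lam * ((n.choose k : ℝ) * (k:ℝ)) = -(c * (k:ℝ)) := by rw [hc]; ring
  rw [h2, sub_neg_eq_add]
  field_simp
  ring
end
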